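/- The Lagrange spectrum, viewed as the set of finite values of limsup_{k→∞}(b_{k+1} + t_{k+1} + vₖ) over irrational α = [0; b₁, b₂, ...] (with tₖ, vₖ the forward and backward tails), is a closed subset of ℝ. -/

import Mathlib

open Filter

noncomputable def cfFin : List ℕ → ℝ
  | [] => 0
  | a :: l => 1 / ((a : ℝ) + cfFin l)

noncomputable def cfInf (a : ℕ → ℕ) : ℝ :=
  limUnder Filter.atTop (fun n => cfFin (List.ofFn (fun i : Fin n => a i)))

/-- forward tail: `cfT a k = [0; b_{k+1}, b_{k+2}, …]` where `bᵢ = a (i-1)`. -/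
noncomputable def cfT (a : ℕ → ℕ) (k : ℕ) : ℝ := cfInf (fun n => a (n + k))

/-- backward tail: `cfV a k = [0; b_k, …, b_1]`. -/
noncomputable def cfV (a : ℕ → ℕ) (k : ℕ) : ℝ := cfFin ((List.range k).reverse.map a)

def cfQ (a : ℕ → ℕ) : ℕ → ℕ
  | 0 => 1
  | 1 => a 0
  | (k + 2) => a (k + 1) * cfQ a (k + 1) + cfQ a k

def cfP (a : ℕ → ℕ) : ℕ → ℕ
  | 0 => 0
  | 1 => 1
  | (k + 2) => a (k + 1) * cfP a (k + 1) + cfP a k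

noncomputable def cfg : List ℕ → ℝ → ℝ
  | [], x => x
  | a :: l, x => 1 / ((a : ℝ) + cfg l x)

def Ones (l : List ℕ) : Prop := ∀ c ∈ l, 1 ≤ c

lemma cfFin_eq_cfg (l : List ℕ) : cfFin l = cfg l 0 := by
  induction l with
  | nil => rfl
  | cons a l ih => simp [cfFin, cfg, ih]

lemma cfg_append (l m : List ℕ) (x : ℝ) : cfg (l ++ m) x = cfg l (cfg m x) := by
  induction l with
  | nil => rfl
  | cons a l ih => simp [cfg, ih]

lemma cfg_nonneg (l : List ℕ) {x : ℝ} (hx : 0 ≤ x) : 0 ≤ cfg l x := by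
  induction l with
  | nil => exact hx
  | cons a l ih =>
    have h := ih
    rw [cfg]
    exact div_nonneg zero_le_one (add_nonneg (Nat.cast_nonneg a) h)

lemma cfg_mem (l : List ℕ) (hl : Ones l) {x : ℝ} (hx : x ∈ Set.Icc (0:ℝ) 1) :
    cfg l x ∈ Set.Icc (0:ℝ) 1 := by
  induction l with
  | nil => exact hx
  | cons a l ih =>
    have ha : (1:ℝ) ≤ a := by exact_mod_cast hl a (by simp)
    have h := ih (fun c hc => hl c (by simp [hc]))
    have h1 : (1:ℝ) ≤ (a:ℝ) + cfg l x := by linarith [h.1]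
    exact ⟨by rw [cfg]; exact div_nonneg zero_le_one (by linarith), by rw [cfg, div_le_one (by linarith)]; linarith⟩

lemma cfg_lip (l : List ℕ) (hl : Ones l) {x y : ℝ} (hx : 0 ≤ x) (hy : 0 ≤ y) :
    |cfg l x - cfg l y| ≤ |x - y| := by
  induction l with
  | nil => simp [cfg]
  | cons a l ih =>
    have ha : (1:ℝ) ≤ a := by exact_mod_cast hl a (by simp)
    have hl' : Ones l := fun c hc => hl c (by simp [hc])
    have hu : 0 ≤ cfg l x := cfg_nonneg l hx
    have hv : 0 ≤ cfg l y := cfg_nonneg l hy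
    have key : |cfg (a :: l) x - cfg (a :: l) y| = |cfg l x - cfg l y| /
        (((a:ℝ) + cfg l x) * ((a:ℝ) + cfg l y)) := by
      rw [cfg, cfg, div_sub_div _ _ (by positivity) (by positivity), abs_div]
      rw [abs_of_pos (a := ((a:ℝ) + cfg l x) * ((a:ℝ) + cfg l y)) (by positivity)]
      congr 1
      rw [abs_sub_comm]
      congr 1
      ring
    rw [key]
    calc |cfg l x - cfg l y| / (((a:ℝ) + cfg l x) * ((a:ℝ) + cfg l y))
        ≤ |cfg l x - cfg l y| := div_le_self (abs_nonneg _) (by nlinarith)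
      _ ≤ |x - y| := ih hl'

lemma cfg_contract_aux : ∀ (n : ℕ) (l : List ℕ), l.length ≤ n → Ones l →
    ∀ {x y : ℝ}, x ∈ Set.Icc (0:ℝ) 1 → y ∈ Set.Icc (0:ℝ) 1 →
    |cfg l x - cfg l y| ≤ 2 * (1/2)^l.length * |x - y| := by
  intro n
  induction n using Nat.strong_induction_on with
  | _ n ih =>
    intro l hlen hl x y hx hy
    match l with
    | [] => simpa [cfg] using by nlinarith [abs_nonneg (x - y)]
    | [a] =>
      have := cfg_lip [a] hl hx.1 hy.1
      simpa using by linarith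
    | a :: b :: l =>
      have ha : (1:ℝ) ≤ a := by exact_mod_cast hl a (by simp)
      have hb : (1:ℝ) ≤ b := by exact_mod_cast hl b (by simp)
      have hl' : Ones l := fun c hc => hl c (by simp [hc])
      have hu := cfg_mem l hl' hx
      have hv := cfg_mem l hl' hy
      set u := cfg l x with hu'
      set v := cfg l y with hv'
      have hD1 : (2:ℝ) ≤ (a:ℝ) * ((b:ℝ) + u) + 1 := by nlinarith [hu.1]
      have hD2 : (2:ℝ) ≤ (a:ℝ) * ((b:ℝ) + v) + 1 := by nlinarith [hv.1]
      have e1 : cfg (a :: b :: l) x - cfg (a :: b :: l) y =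
          (u - v) / (((a:ℝ) * ((b:ℝ) + u) + 1) * ((a:ℝ) * ((b:ℝ) + v) + 1)) := by
        show 1 / ((a:ℝ) + cfg (b :: l) x) - 1 / ((a:ℝ) + cfg (b :: l) y) = _
        show 1 / ((a:ℝ) + 1 / ((b:ℝ) + u)) - 1 / ((a:ℝ) + 1 / ((b:ℝ) + v)) = _
        have h1 : (0:ℝ) < (b:ℝ) + u := by linarith [hu.1]
        have h2 : (0:ℝ) < (b:ℝ) + v := by linarith [hv.1]
        have h3 : (0:ℝ) < (a:ℝ) + 1 / ((b:ℝ) + u) := by positivity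
        have h4 : (0:ℝ) < (a:ℝ) + 1 / ((b:ℝ) + v) := by positivity
        field_simp
        ring
      have e2 : |cfg (a :: b :: l) x - cfg (a :: b :: l) y| ≤ |u - v| / 4 := by
        rw [e1, abs_div, abs_of_pos (show (0:ℝ) < ((a:ℝ)*((b:ℝ)+u)+1)*((a:ℝ)*((b:ℝ)+v)+1) by nlinarith)]
        exact div_le_div_of_nonneg_left (abs_nonneg _) (by norm_num) (by nlinarith)
      have e3 : |u - v| ≤ 2 * (1/2)^l.length * |x - y| :=
        ih l.length (by simp at hlen; omega) l le_rfl hl' hx hy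
      calc |cfg (a :: b :: l) x - cfg (a :: b :: l) y| ≤ |u - v| / 4 := e2
        _ ≤ (2 * (1/2)^l.length * |x - y|) / 4 := by linarith
        _ = 2 * (1/2)^(a :: b :: l).length * |x - y| := by
            simp [pow_succ]; ring

lemma ones_map {f : ℕ → ℕ} (hf : ∀ n, 1 ≤ f n) (l : List ℕ) : Ones (l.map f) := by
  intro c hc
  rcases List.mem_map.1 hc with ⟨i, _, rfl⟩
  exact hf i

lemma ofFn_eq_range_map (n : ℕ) (a : ℕ → ℕ) :
    List.ofFn (fun i : Fin n => a i) = (List.range n).map a := by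
  apply List.ext_getElem <;> simp

noncomputable def cfS (a : ℕ → ℕ) (n : ℕ) : ℝ := cfg ((List.range n).map a) 0

lemma cfS_mem {a : ℕ → ℕ} (ha : ∀ n, 1 ≤ a n) (n : ℕ) : cfS a n ∈ Set.Icc (0:ℝ) 1 :=
  cfg_mem _ (ones_map ha _) (by constructor <;> norm_num)

lemma range_map_split (a : ℕ → ℕ) (n k : ℕ) :
    (List.range (n + k)).map a
      = (List.range n).map a ++ (List.range k).map (fun i => a (n + i)) := by
  rw [List.range_add, List.map_append, List.map_map]
  rfl

lemma cfS_split (a : ℕ → ℕ) (n k : ℕ) :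
    cfS a (n + k) = cfg ((List.range n).map a) (cfS (fun i => a (n + i)) k) := by
  rw [cfS, range_map_split, cfg_append]
  rfl

lemma cfS_cauchy {a : ℕ → ℕ} (ha : ∀ n, 1 ≤ a n) : CauchySeq (cfS a) := by
  apply cauchySeq_of_le_geometric (1/2) 2 (by norm_num)
  intro n
  rw [Real.dist_eq]
  have h1 : cfS a n = cfg ((List.range n).map a) 0 := rfl
  have h2 := cfS_split a n 1
  have hm := cfS_mem (a := fun i => a (n + i)) (fun i => ha _) 1
  calc |cfS a n - cfS a (n+1)|
      = |cfg ((List.range n).map a) 0 - cfg ((List.range n).map a) (cfS (fun i => a (n+i)) 1)| := by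
        rw [h1, h2]
    _ ≤ 2 * (1/2)^(((List.range n).map a).length) * |0 - cfS (fun i => a (n+i)) 1| :=
        cfg_contract_aux _ _ le_rfl (ones_map ha _) (by constructor <;> norm_num) hm
    _ ≤ 2 * (1/2)^n := by
        simp only [List.length_map, List.length_range]
        have : |0 - cfS (fun i => a (n+i)) 1| ≤ 1 := by
          rw [abs_sub_comm]
          simp [abs_of_nonneg hm.1]
          exact hm.2
        nlinarith [pow_pos (show (0:ℝ) < 1/2 by norm_num) n]
    _ = 2 * (1/2)^n := rfl

lemma cfInf_tendsto {a : ℕ → ℕ} (ha : ∀ n, 1 ≤ a n) :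
    Tendsto (cfS a) atTop (nhds (cfInf a)) := by
  obtain ⟨L, hL⟩ := cauchySeq_tendsto_of_complete (cfS_cauchy ha)
  have : cfInf a = L := by
    unfold cfInf
    apply Filter.Tendsto.limUnder_eq
    have : (fun n => cfFin (List.ofFn fun i : Fin n => a i)) = cfS a := by
      funext n
      rw [ofFn_eq_range_map, cfFin_eq_cfg]
      rfl
    rw [this]; exact hL
  rw [this]; exact hL

lemma cfInf_mem {a : ℕ → ℕ} (ha : ∀ n, 1 ≤ a n) : cfInf a ∈ Set.Icc (0:ℝ) 1 :=
  isClosed_Icc.mem_of_tendsto (cfInf_tendsto ha) (Eventually.of_forall (cfS_mem ha))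

lemma cfInf_shift {a : ℕ → ℕ} (ha : ∀ n, 1 ≤ a n) (n : ℕ) :
    cfInf a = cfg ((List.range n).map a) (cfInf (fun i => a (n + i))) := by
  have h1 : Tendsto (fun k => cfS a (n + k)) atTop (nhds (cfInf a)) := by
    have := (cfInf_tendsto ha).comp (tendsto_add_atTop_nat n)
    simpa [Function.comp_def, Nat.add_comm] using this
  have hb : ∀ i, 1 ≤ a (n + i) := fun i => ha _
  have h2 : Tendsto (fun k => cfg ((List.range n).map a) (cfS (fun i => a (n + i)) k)) atTop
      (nhds (cfg ((List.range n).map a) (cfInf (fun i => a (n + i))))) := by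
    rw [tendsto_iff_dist_tendsto_zero]
    apply squeeze_zero (fun k => dist_nonneg)
      (g := fun k => dist (cfS (fun i => a (n + i)) k) (cfInf (fun i => a (n + i))))
    · intro k
      rw [Real.dist_eq, Real.dist_eq]
      exact cfg_lip _ (ones_map ha _) (cfS_mem hb k).1 (cfInf_mem hb).1
    · rw [← tendsto_iff_dist_tendsto_zero]
      exact cfInf_tendsto hb
  have : (fun k => cfS a (n + k)) = fun k => cfg ((List.range n).map a) (cfS (fun i => a (n + i)) k) := by
    funext k; exact cfS_split a n k
  rw [this] at h1
  exact tendsto_nhds_unique h1 h2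

lemma cfT_mem {a : ℕ → ℕ} (ha : ∀ n, 1 ≤ a n) (k : ℕ) : cfT a k ∈ Set.Icc (0:ℝ) 1 :=
  cfInf_mem (fun n => ha _)

lemma cfT_decomp {a : ℕ → ℕ} (ha : ∀ n, 1 ≤ a n) (k d : ℕ) :
    cfT a k = cfg ((List.range d).map (fun i => a (k + i))) (cfT a (k + d)) := by
  have h := cfInf_shift (a := fun n => a (n + k)) (fun n => ha _) d
  rw [cfT, h]
  congr 1
  · apply List.map_congr_left
    intro i _
    congr 1
    omega
  · rw [cfT]
    congr 1
    funext i
    congr 1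
    omega

lemma cfV_mem {a : ℕ → ℕ} (ha : ∀ n, 1 ≤ a n) (k : ℕ) : cfV a k ∈ Set.Icc (0:ℝ) 1 := by
  rw [cfV, cfFin_eq_cfg]
  exact cfg_mem _ (ones_map ha _) (by constructor <;> norm_num)

lemma rev_range_split (m d : ℕ) :
    (List.range (m + d)).reverse
      = ((List.range d).map (fun i => m + d - 1 - i)) ++ (List.range m).reverse := by
  induction d with
  | zero => simp
  | succ d ih =>
    have h1 : m + (d + 1) = (m + d) + 1 := by omega
    rw [h1, List.range_succ, List.reverse_append, List.range_succ_eq_map]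
    simp only [List.reverse_singleton, List.map_cons, List.map_map, List.singleton_append]
    rw [ih, List.cons_append]
    refine congrArg₂ (· :: ·) (by omega) (congrArg₂ (· ++ ·) ?_ rfl)
    apply List.map_congr_left
    intro i hi
    simp only [Function.comp_apply]
    omega

lemma cfV_decomp {a : ℕ → ℕ} (ha : ∀ n, 1 ≤ a n) (m d : ℕ) :
    cfV a (m + d) = cfg ((List.range d).map (fun i => a (m + d - 1 - i))) (cfV a m) := by
  rw [cfV, cfV, cfFin_eq_cfg, cfFin_eq_cfg, rev_range_split, List.map_append, cfg_append,
    List.map_map]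
  rfl

lemma limsup_extract_upper {f : ℕ → ℝ} {y : ℝ}
    (h : Filter.limsup (fun k => ((f k : ℝ) : EReal)) Filter.atTop = (y : EReal))
    {ε : ℝ} (hε : 0 < ε) : ∀ᶠ k in atTop, f k ≤ y + ε := by
  have h1 : Filter.limsup (fun k => ((f k : ℝ) : EReal)) Filter.atTop < ((y + ε : ℝ) : EReal) := by
    rw [h]
    exact_mod_cast (by linarith : y < y + ε)
  filter_upwards [Filter.eventually_lt_of_limsup_lt h1] with k hk
  exact le_of_lt (by exact_mod_cast hk)

lemma limsup_extract_lower {f : ℕ → ℝ} {y : ℝ}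
    (h : Filter.limsup (fun k => ((f k : ℝ) : EReal)) Filter.atTop = (y : EReal))
    {ε : ℝ} (hε : 0 < ε) : ∃ᶠ k in atTop, y - ε ≤ f k := by
  have h1 : ((y - ε : ℝ) : EReal) < Filter.limsup (fun k => ((f k : ℝ) : EReal)) Filter.atTop := by
    rw [h]
    exact_mod_cast (by linarith : y - ε < y)
  have := Filter.frequently_lt_of_lt_limsup (by isBoundedDefault) h1
  exact this.mono (fun k hk => le_of_lt (by exact_mod_cast hk))

lemma limsup_build {f : ℕ → ℝ} {y : ℝ}
    (h1 : ∀ ε : ℝ, 0 < ε → ∀ᶠ k in atTop, f k ≤ y + ε)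
    (h2 : ∀ ε : ℝ, 0 < ε → ∃ᶠ k in atTop, y - ε ≤ f k) :
    Filter.limsup (fun k => ((f k : ℝ) : EReal)) Filter.atTop = (y : EReal) := by
  apply le_antisymm
  · apply le_of_forall_gt_imp_ge_of_dense
    intro c hc
    induction c with
    | bot => exact absurd hc (by simp)
    | top => exact le_top
    | coe r =>
      have hyr : y < r := by exact_mod_cast hc
      apply Filter.limsup_le_of_le (by isBoundedDefault)
      filter_upwards [h1 ((r - y)/2) (by linarith)] with k hk
      exact_mod_cast (by linarith : f k ≤ r)
  · by_contra hlt
    push_neg at hlt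
    obtain ⟨c, hc1, hc2⟩ := exists_between hlt
    have hcy : c < (y : EReal) := hc2
    have hne : c ≠ ⊥ := by
      intro hbot
      rw [hbot] at hc1
      exact absurd hc1 (by simp)
    induction c with
    | bot => exact hne rfl
    | top => exact absurd hc2 (not_lt.mpr le_top)
    | coe r =>
      have hry : r < y := by exact_mod_cast hc2
      have hfreq : ∃ᶠ k in atTop, (r : EReal) ≤ ((f k : ℝ) : EReal) :=
        (h2 (y - r) (by linarith)).mono (fun k hk => by exact_mod_cast (by linarith : r ≤ f k))
      have := Filter.le_limsup_of_frequently_le hfreq (by isBoundedDefault)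
      exact absurd this (not_le.mpr hc1)

noncomputable def lam (a : ℕ → ℕ) (k : ℕ) : ℝ := (a k : ℝ) + cfT a (k + 1) + cfV a k

lemma cfg_contract_one (d : ℕ) (f : ℕ → ℕ) (hf : ∀ t, 1 ≤ f t) {u v : ℝ}
    (hu : u ∈ Set.Icc (0:ℝ) 1) (hv : v ∈ Set.Icc (0:ℝ) 1) :
    |cfg ((List.range d).map f) u - cfg ((List.range d).map f) v| ≤ 2 * (1/2)^d := by
  have h := cfg_contract_aux ((List.range d).map f).length _ le_rfl (ones_map hf _) hu hv
  have hlen : ((List.range d).map f).length = d := by simp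
  rw [hlen] at h
  have habs : |u - v| ≤ 1 := abs_le.mpr ⟨by linarith [hu.1, hu.2, hv.1, hv.2],
    by linarith [hu.1, hu.2, hv.1, hv.2]⟩
  nlinarith [pow_pos (show (0:ℝ) < 1/2 by norm_num) d, abs_nonneg (u - v)]

lemma cfg_lip_map (d : ℕ) (f : ℕ → ℕ) (hf : ∀ t, 1 ≤ f t) {u v : ℝ}
    (hu : 0 ≤ u) (hv : 0 ≤ v) :
    |cfg ((List.range d).map f) u - cfg ((List.range d).map f) v| ≤ |u - v| :=
  cfg_lip _ (ones_map hf _) hu hv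

lemma wcong (d : ℕ) (f g : ℕ → ℕ) (h : ∀ t, t < d → f t = g t) :
    (List.range d).map f = (List.range d).map g :=
  List.map_congr_left (fun t ht => h t (List.mem_range.mp ht))

lemma choose_cuts (c : ℕ → ℕ) (Yj ζj : ℝ) (τ ν : ℝ) (j : ℕ)
    (hup : ∀ᶠ k in atTop, lam c k ≤ Yj + (1/2)^j)
    (hfr : ∃ᶠ k in atTop, Yj - (1/2)^j ≤ lam c k)
    (hτν : ∃ᶠ k in atTop, |cfT c k - τ| ≤ ζj ∧ |cfV c k - ν| ≤ ζj) :
    ∃ s p e : ℕ, s ≤ p ∧ p < e ∧ s + j + 1 ≤ e ∧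
      (∀ k, s ≤ k → lam c k ≤ Yj + (1/2)^j) ∧
      (Yj - (1/2)^j ≤ lam c p) ∧
      |cfT c s - τ| ≤ ζj ∧ |cfV c s - ν| ≤ ζj ∧
      |cfT c e - τ| ≤ ζj ∧ |cfV c e - ν| ≤ ζj := by
  obtain ⟨K, hK⟩ := Filter.eventually_atTop.mp hup
  obtain ⟨s, hsK, hs1, hs2⟩ := Filter.frequently_atTop.mp hτν K
  obtain ⟨p, hps, hp⟩ := Filter.frequently_atTop.mp hfr s
  obtain ⟨e, heb, he1, he2⟩ := Filter.frequently_atTop.mp hτν (max (p+1) (s+j+1))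
  exact ⟨s, p, e, hps, by omega, by omega,
    fun k hk => hK k (le_trans hsK hk), hp, hs1, hs2, he1, he2⟩

lemma spectrum_limit (x : ℝ) (y : ℕ → ℝ) (b : ℕ → ℕ → ℕ)
    (hb : ∀ j n, 1 ≤ b j n)
    (hy : Tendsto y atTop (nhds x))
    (hl : ∀ j, Filter.limsup (fun k => ((lam (b j) k : ℝ) : EReal)) Filter.atTop = (y j : EReal)) :
    ∃ a : ℕ → ℕ, (∀ n, 1 ≤ a n) ∧
      Filter.limsup (fun k => ((lam a k : ℝ) : EReal)) Filter.atTop = (x : EReal) := by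
  classical
  -- Step A : per-j cluster point of tails
  have hIcc : IsCompact ((Set.Icc (0:ℝ) 1) ×ˢ (Set.Icc (0:ℝ) 1)) :=
    isCompact_Icc.prod isCompact_Icc
  have hA : ∀ j, ∃ q ∈ (Set.Icc (0:ℝ) 1) ×ˢ (Set.Icc (0:ℝ) 1), ∃ ψ : ℕ → ℕ,
      StrictMono ψ ∧ Tendsto ((fun k => (cfT (b j) k, cfV (b j) k)) ∘ ψ) atTop (nhds q) := by
    intro j
    exact hIcc.tendsto_subseq (fun k => ⟨cfT_mem (hb j) k, cfV_mem (hb j) k⟩)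
  choose τν hτνmem ψ hψmono hψlim using hA
  -- Step B : outer subsequence
  obtain ⟨q, hqmem, φ, hφmono, hφlim⟩ := hIcc.tendsto_subseq hτνmem
  set τ : ℝ := q.1
  set ν : ℝ := q.2
  set Y : ℕ → ℝ := fun j => y (φ j) with hYdef
  have hY : Tendsto Y atTop (nhds x) := hy.comp hφmono.tendsto_atTop
  set ζ : ℕ → ℝ := fun j => (1/2)^j + |(τν (φ j)).1 - τ| + |(τν (φ j)).2 - ν| with hζdef
  have hζ0 : ∀ j, 0 ≤ ζ j := by
    intro j
    have := abs_nonneg ((τν (φ j)).1 - τ)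
    have := abs_nonneg ((τν (φ j)).2 - ν)
    positivity
  have hζ : Tendsto ζ atTop (nhds 0) := by
    have h1 : Tendsto (fun j => (τν (φ j)).1) atTop (nhds τ) :=
      (continuous_fst.tendsto q).comp hφlim
    have h2 : Tendsto (fun j => (τν (φ j)).2) atTop (nhds ν) :=
      (continuous_snd.tendsto q).comp hφlim
    have h3 : Tendsto (fun j : ℕ => ((1:ℝ)/2)^j) atTop (nhds 0) :=
      tendsto_pow_atTop_nhds_zero_of_lt_one (by norm_num) (by norm_num)
    have h4 : Tendsto (fun j => |(τν (φ j)).1 - τ|) atTop (nhds 0) := by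
      have := (h1.sub_const τ).abs
      simpa using this
    have h5 : Tendsto (fun j => |(τν (φ j)).2 - ν|) atTop (nhds 0) := by
      have := (h2.sub_const ν).abs
      simpa using this
    have h6 := (h3.add h4).add h5
    rw [hζdef]
    simpa using h6
  -- Step C : cuts
  have hcuts : ∀ j, ∃ s p e : ℕ, s ≤ p ∧ p < e ∧ s + j + 1 ≤ e ∧
      (∀ k, s ≤ k → lam (b (φ j)) k ≤ Y j + (1/2)^j) ∧
      (Y j - (1/2)^j ≤ lam (b (φ j)) p) ∧
      |cfT (b (φ j)) s - τ| ≤ ζ j ∧ |cfV (b (φ j)) s - ν| ≤ ζ j ∧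
      |cfT (b (φ j)) e - τ| ≤ ζ j ∧ |cfV (b (φ j)) e - ν| ≤ ζ j := by
    intro j
    apply choose_cuts
    · exact limsup_extract_upper (hl (φ j)) (by positivity)
    · exact limsup_extract_lower (hl (φ j)) (by positivity)
    · rw [Filter.frequently_atTop]
      intro m
      have hev : ∀ᶠ n in atTop, dist (((fun k => (cfT (b (φ j)) k, cfV (b (φ j)) k)) ∘ (ψ (φ j))) n)
          (τν (φ j)) < (1/2)^j :=
        Metric.tendsto_nhds.mp (hψlim (φ j)) _ (by positivity)
      obtain ⟨N, hN⟩ := Filter.eventually_atTop.mp hev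
      refine ⟨ψ (φ j) (max N m), le_trans (le_max_right N m) (hψmono (φ j)).le_apply, ?_, ?_⟩
      · have hd := hN (max N m) (le_max_left N m)
        rw [Prod.dist_eq] at hd
        have hd1 : dist (cfT (b (φ j)) (ψ (φ j) (max N m))) (τν (φ j)).1 ≤ (1/2)^j :=
          le_of_lt (lt_of_le_of_lt (le_max_left _ _) hd)
        rw [Real.dist_eq] at hd1
        have : |cfT (b (φ j)) (ψ (φ j) (max N m)) - τ| ≤
            |cfT (b (φ j)) (ψ (φ j) (max N m)) - (τν (φ j)).1| + |(τν (φ j)).1 - τ| := by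
          have := abs_sub_le (cfT (b (φ j)) (ψ (φ j) (max N m))) (τν (φ j)).1 τ
          linarith
        rw [hζdef]
        simp only []
        linarith [abs_nonneg ((τν (φ j)).2 - ν)]
      · have hd := hN (max N m) (le_max_left N m)
        rw [Prod.dist_eq] at hd
        have hd2 : dist (cfV (b (φ j)) (ψ (φ j) (max N m))) (τν (φ j)).2 ≤ (1/2)^j :=
          le_of_lt (lt_of_le_of_lt (le_max_right _ _) hd)
        rw [Real.dist_eq] at hd2
        have : |cfV (b (φ j)) (ψ (φ j) (max N m)) - ν| ≤
            |cfV (b (φ j)) (ψ (φ j) (max N m)) - (τν (φ j)).2| + |(τν (φ j)).2 - ν| := by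
          have := abs_sub_le (cfV (b (φ j)) (ψ (φ j) (max N m))) (τν (φ j)).2 ν
          linarith
        rw [hζdef]
        simp only []
        linarith [abs_nonneg ((τν (φ j)).1 - τ)]
  choose s p e hsp hpe hsje hup hnear hTs hVs hTe hVe using hcuts
  -- Step D : construction of the glued sequence
  set c : ℕ → ℕ → ℕ := fun j => b (φ j) with hcdef
  have hc : ∀ j n, 1 ≤ c j n := fun j n => hb (φ j) n
  set L : ℕ → ℕ := fun j => e j - s j with hLdef
  have hL : ∀ j, j + 1 ≤ L j := by
    intro j
    have := hsje j
    have := hpe j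
    have := hsp j
    simp only [hLdef]
    omega
  have hLse : ∀ j, s j + L j = e j := by
    intro j
    have := hsje j
    simp only [hLdef]
    omega
  set off : ℕ → ℕ := fun j => Nat.rec 0 (fun i acc => acc + L i) j with hoffdef
  have hoffS : ∀ j, off (j+1) = off j + L j := fun j => rfl
  have hoff_ge : ∀ j, j ≤ off j := by
    intro j
    induction j with
    | zero => exact Nat.zero_le _
    | succ j ih =>
      have := hL j
      rw [hoffS]
      omega
  have hoff_mono : ∀ i j, i ≤ j → off i ≤ off j := by
    have : Monotone off := monotone_nat_of_le_succ (fun n => by rw [hoffS]; omega)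
    exact fun i j h => this h
  set J : ℕ → ℕ := fun k => Nat.findGreatest (fun j => off j ≤ k) k with hJdef
  have hJ1 : ∀ k, off (J k) ≤ k := by
    intro k
    have := Nat.findGreatest_spec (P := fun j => off j ≤ k) (m := 0) (Nat.zero_le k)
      (Nat.zero_le k)
    simpa [hJdef] using this
  have hJ2 : ∀ k, k < off (J k + 1) := by
    intro k
    by_contra hcon
    push_neg at hcon
    have h1 : J k + 1 ≤ k := le_trans (hoff_ge _) hcon
    have h2 : J k + 1 ≤ J k := Nat.le_findGreatest h1 hcon
    omega
  have hJeq : ∀ j k, off j ≤ k → k < off (j+1) → J k = j := by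
    intro j k h1 h2
    have hle : j ≤ J k := Nat.le_findGreatest (le_trans (hoff_ge j) h1) h1
    have hge : J k ≤ j := by
      by_contra hcon
      push_neg at hcon
      have := hoff_mono (j+1) (J k) hcon
      have := hJ1 k
      omega
    omega
  set A : ℕ → ℕ := fun k => c (J k) (s (J k) + (k - off (J k))) with hAdef
  have hA1 : ∀ n, 1 ≤ A n := fun n => hc _ _
  have hA : ∀ j i, i < L j → A (off j + i) = c j (s j + i) := by
    intro j i hi
    have h1 : off j ≤ off j + i := by omega
    have h2 : off j + i < off (j+1) := by rw [hoffS]; omega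
    have h3 : J (off j + i) = j := hJeq j _ h1 h2
    simp only [hAdef, h3]
    congr 1
    omega
  -- Step E : seam estimates
  have hST : ∀ j, |cfT A (off j) - cfT (c j) (s j)| ≤ 2 * (1/2)^(L j) := by
    intro j
    have d1 := cfT_decomp hA1 (off j) (L j)
    have d2 := cfT_decomp (hc j) (s j) (L j)
    have hw : (List.range (L j)).map (fun i => A (off j + i))
        = (List.range (L j)).map (fun i => c j (s j + i)) :=
      wcong _ _ _ (fun t ht => hA j t ht)
    rw [d1, d2, hw]
    exact cfg_contract_one (L j) _ (fun t => hc j _) (cfT_mem hA1 _) (cfT_mem (hc j) _)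
  have hSV : ∀ j, |cfV A (off (j+1)) - cfV (c j) (e j)| ≤ 2 * (1/2)^(L j) := by
    intro j
    have d1 := cfV_decomp hA1 (off j) (L j)
    have d2 := cfV_decomp (hc j) (s j) (L j)
    have hw : (List.range (L j)).map (fun i => A (off j + L j - 1 - i))
        = (List.range (L j)).map (fun i => c j (s j + L j - 1 - i)) := by
      apply wcong
      intro t ht
      have h1 : off j + L j - 1 - t = off j + (L j - 1 - t) := by omega
      have h2 : s j + L j - 1 - t = s j + (L j - 1 - t) := by omega
      rw [h1, h2]
      exact hA j _ (by omega)
    have e1 : off (j+1) = off j + L j := hoffS j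
    have e2 : e j = s j + L j := (hLse j).symm
    rw [e1, e2, d1, d2, hw]
    exact cfg_contract_one (L j) _ (fun t => hc j _) (cfV_mem hA1 _) (cfV_mem (hc j) _)
  have hTT : ∀ j, |cfT A (off (j+1)) - cfT (c j) (e j)|
      ≤ 2*(1/2)^(L (j+1)) + ζ (j+1) + ζ j := by
    intro j
    have h1 := hST (j+1)
    have h2 : |cfT (c j) (e j) - τ| ≤ ζ j := hTe j
    have h3 : |cfT (c (j+1)) (s (j+1)) - τ| ≤ ζ (j+1) := hTs (j+1)
    calc |cfT A (off (j+1)) - cfT (c j) (e j)|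
        ≤ |cfT A (off (j+1)) - cfT (c (j+1)) (s (j+1))|
          + |cfT (c (j+1)) (s (j+1)) - cfT (c j) (e j)| := abs_sub_le _ _ _
      _ ≤ 2*(1/2)^(L (j+1)) + (|cfT (c (j+1)) (s (j+1)) - τ| + |τ - cfT (c j) (e j)|) :=
          add_le_add h1 (abs_sub_le _ _ _)
      _ ≤ 2*(1/2)^(L (j+1)) + (ζ (j+1) + ζ j) := by
          rw [abs_sub_comm τ (cfT (c j) (e j))]
          exact add_le_add le_rfl (add_le_add h3 h2)
      _ = 2*(1/2)^(L (j+1)) + ζ (j+1) + ζ j := by ring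
  have hVV : ∀ j, |cfV A (off (j+1)) - cfV (c (j+1)) (s (j+1))|
      ≤ 2*(1/2)^(L j) + ζ j + ζ (j+1) := by
    intro j
    have h1 := hSV j
    have h2 : |cfV (c j) (e j) - ν| ≤ ζ j := hVe j
    have h3 : |cfV (c (j+1)) (s (j+1)) - ν| ≤ ζ (j+1) := hVs (j+1)
    calc |cfV A (off (j+1)) - cfV (c (j+1)) (s (j+1))|
        ≤ |cfV A (off (j+1)) - cfV (c j) (e j)|
          + |cfV (c j) (e j) - cfV (c (j+1)) (s (j+1))| := abs_sub_le _ _ _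
      _ ≤ 2*(1/2)^(L j) + (|cfV (c j) (e j) - ν| + |ν - cfV (c (j+1)) (s (j+1))|) :=
          add_le_add h1 (abs_sub_le _ _ _)
      _ ≤ 2*(1/2)^(L j) + (ζ j + ζ (j+1)) := by
          rw [abs_sub_comm ν (cfV (c (j+1)) (s (j+1)))]
          exact add_le_add le_rfl (add_le_add h2 h3)
      _ = 2*(1/2)^(L j) + ζ j + ζ (j+1) := by ring
  -- Step F : main block comparison
  have hMAIN : ∀ m i, i < L (m+1) →
      |lam A (off (m+1) + i) - lam (c (m+1)) (s (m+1) + i)| ≤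
        (2*(1/2)^(L (m+2)) + ζ (m+2) + ζ (m+1)) + (2*(1/2)^(L m) + ζ m + ζ (m+1)) := by
    intro m i hi
    have hAk : A (off (m+1) + i) = c (m+1) (s (m+1) + i) := hA (m+1) i hi
    -- forward tails
    have dT1 := cfT_decomp hA1 (off (m+1) + i + 1) (L (m+1) - 1 - i)
    have dT2 := cfT_decomp (hc (m+1)) (s (m+1) + i + 1) (L (m+1) - 1 - i)
    have eoff2 : off (m+2) = off (m+1) + L (m+1) := hoffS (m+1)
    have eT1 : off (m+1) + i + 1 + (L (m+1) - 1 - i) = off (m+2) := by omega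
    have eT2 : s (m+1) + i + 1 + (L (m+1) - 1 - i) = e (m+1) := by
      have := hLse (m+1)
      omega
    have hwT : (List.range (L (m+1) - 1 - i)).map (fun t => A (off (m+1) + i + 1 + t))
        = (List.range (L (m+1) - 1 - i)).map (fun t => c (m+1) (s (m+1) + i + 1 + t)) := by
      apply wcong
      intro t ht
      have h1 : off (m+1) + i + 1 + t = off (m+1) + (i + 1 + t) := by omega
      have h2 : s (m+1) + i + 1 + t = s (m+1) + (i + 1 + t) := by omega
      rw [h1, h2]
      exact hA (m+1) _ (by omega)
    have hTd : |cfT A (off (m+1) + i + 1) - cfT (c (m+1)) (s (m+1) + i + 1)|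
        ≤ |cfT A (off (m+2)) - cfT (c (m+1)) (e (m+1))| := by
      rw [dT1, dT2, hwT, eT1, eT2]
      exact cfg_lip_map _ _ (fun t => hc (m+1) _) (cfT_mem hA1 _).1 (cfT_mem (hc (m+1)) _).1
    -- backward tails
    have dV1 := cfV_decomp hA1 (off (m+1)) i
    have dV2 := cfV_decomp (hc (m+1)) (s (m+1)) i
    have hwV : (List.range i).map (fun t => A (off (m+1) + i - 1 - t))
        = (List.range i).map (fun t => c (m+1) (s (m+1) + i - 1 - t)) := by
      apply wcong
      intro t ht
      have h1 : off (m+1) + i - 1 - t = off (m+1) + (i - 1 - t) := by omega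
      have h2 : s (m+1) + i - 1 - t = s (m+1) + (i - 1 - t) := by omega
      rw [h1, h2]
      exact hA (m+1) _ (by omega)
    have hVd : |cfV A (off (m+1) + i) - cfV (c (m+1)) (s (m+1) + i)|
        ≤ |cfV A (off (m+1)) - cfV (c (m+1)) (s (m+1))| := by
      rw [dV1, dV2, hwV]
      exact cfg_lip_map _ _ (fun t => hc (m+1) _) (cfV_mem hA1 _).1 (cfV_mem (hc (m+1)) _).1
    have hsplit : lam A (off (m+1) + i) - lam (c (m+1)) (s (m+1) + i)
        = (cfT A (off (m+1) + i + 1) - cfT (c (m+1)) (s (m+1) + i + 1))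
          + (cfV A (off (m+1) + i) - cfV (c (m+1)) (s (m+1) + i)) := by
      rw [lam, lam, hAk]
      ring
    have habs : |lam A (off (m+1) + i) - lam (c (m+1)) (s (m+1) + i)|
        ≤ |cfT A (off (m+1) + i + 1) - cfT (c (m+1)) (s (m+1) + i + 1)|
          + |cfV A (off (m+1) + i) - cfV (c (m+1)) (s (m+1) + i)| := by
      rw [hsplit]
      exact abs_add_le _ _
    have b1 := hTT (m+1)
    have b2 := hVV m
    linarith
  -- Step G : conclusion
  refine ⟨A, hA1, limsup_build ?_ ?_⟩
  · -- upper bound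
    intro ε hε
    have hev : ∀ᶠ j in atTop, ζ j ≤ ε/16 ∧ ((1:ℝ)/2)^j ≤ ε/16 ∧ |Y j - x| ≤ ε/16 := by
      have e1 : ∀ᶠ j in atTop, ζ j ≤ ε/16 :=
        hζ.eventually (ge_mem_nhds (by linarith : (0:ℝ) < ε/16))
      have e2 : ∀ᶠ j in atTop, ((1:ℝ)/2)^j ≤ ε/16 := by
        have h3 : Tendsto (fun j : ℕ => ((1:ℝ)/2)^j) atTop (nhds 0) :=
          tendsto_pow_atTop_nhds_zero_of_lt_one (by norm_num) (by norm_num)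
        exact h3.eventually (ge_mem_nhds (by linarith : (0:ℝ) < ε/16))
      have e3 : ∀ᶠ j in atTop, |Y j - x| ≤ ε/16 := by
        have := Metric.tendsto_nhds.mp hY (ε/16) (by linarith)
        exact this.mono (fun j hj => by rw [Real.dist_eq] at hj; exact le_of_lt hj)
      exact (e1.and (e2.and e3))
    obtain ⟨J₀, hJ₀⟩ := Filter.eventually_atTop.mp hev
    rw [Filter.eventually_atTop]
    refine ⟨off (J₀ + 1), fun k hk => ?_⟩
    have hjge : J₀ + 1 ≤ J k := by
      have h1 : J₀ + 1 ≤ k := le_trans (hoff_ge (J₀+1)) hk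
      exact Nat.le_findGreatest (P := fun j => off j ≤ k) h1 hk
    obtain ⟨m, hm⟩ : ∃ m, J k = m + 1 := ⟨J k - 1, by omega⟩
    have hmge : J₀ ≤ m := by omega
    have hoffk : off (J k) ≤ k := hJ1 k
    have hoffk2 : k < off (J k) + L (J k) := by
      have := hJ2 k
      rw [hoffS] at this
      exact this
    set i := k - off (J k) with hidef
    have hiL : i < L (J k) := by omega
    have hkeq : k = off (m+1) + i := by rw [← hm]; omega
    have hcomp := hMAIN m i (hm ▸ hiL)
    have hupb : lam (c (m+1)) (s (m+1) + i) ≤ Y (m+1) + (1/2)^(m+1) :=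
      hup (m+1) (s (m+1) + i) (by omega)
    have hb1 := (hJ₀ m hmge).1
    have hb2 := (hJ₀ m hmge).2.1
    have hb3 := (hJ₀ (m+1) (by omega)).1
    have hb4 := (hJ₀ (m+1) (by omega)).2.1
    have hb5 := (hJ₀ (m+1) (by omega)).2.2
    have hb6 := (hJ₀ (m+2) (by omega)).1
    have hb7 := (hJ₀ (m+2) (by omega)).2.1
    have hpow : ∀ n, ((1:ℝ)/2)^(L n) ≤ ((1:ℝ)/2)^n := by
      intro n
      apply pow_le_pow_of_le_one (by norm_num) (by norm_num)
      have := hL n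
      omega
    have hp1 := hpow m
    have hp2 := hpow (m+2)
    have habs' : lam A k ≤ lam (c (m+1)) (s (m+1) + i)
        + ((2*(1/2)^(L (m+2)) + ζ (m+2) + ζ (m+1)) + (2*(1/2)^(L m) + ζ m + ζ (m+1))) := by
      rw [hkeq]
      have := abs_le.mp hcomp
      linarith [this.2]
    have : |Y (m+1) - x| ≤ ε/16 := hb5
    have := abs_le.mp this
    calc lam A k ≤ lam (c (m+1)) (s (m+1) + i)
          + ((2*(1/2)^(L (m+2)) + ζ (m+2) + ζ (m+1)) + (2*(1/2)^(L m) + ζ m + ζ (m+1))) := habs'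
      _ ≤ (Y (m+1) + (1/2)^(m+1))
          + ((2*(1/2)^(L (m+2)) + ζ (m+2) + ζ (m+1)) + (2*(1/2)^(L m) + ζ m + ζ (m+1))) := by
          linarith
      _ ≤ x + ε := by
          have hhalf : ((1:ℝ)/2)^(m+1) ≤ ((1:ℝ)/2)^m :=
            pow_le_pow_of_le_one (by norm_num) (by norm_num) (by omega)
          linarith
  · -- lower bound
    intro ε hε
    have hev : ∀ᶠ j in atTop, ζ j ≤ ε/16 ∧ ((1:ℝ)/2)^j ≤ ε/16 ∧ |Y j - x| ≤ ε/16 := by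
      have e1 : ∀ᶠ j in atTop, ζ j ≤ ε/16 :=
        hζ.eventually (ge_mem_nhds (by linarith : (0:ℝ) < ε/16))
      have e2 : ∀ᶠ j in atTop, ((1:ℝ)/2)^j ≤ ε/16 := by
        have h3 : Tendsto (fun j : ℕ => ((1:ℝ)/2)^j) atTop (nhds 0) :=
          tendsto_pow_atTop_nhds_zero_of_lt_one (by norm_num) (by norm_num)
        exact h3.eventually (ge_mem_nhds (by linarith : (0:ℝ) < ε/16))
      have e3 : ∀ᶠ j in atTop, |Y j - x| ≤ ε/16 := by
        have := Metric.tendsto_nhds.mp hY (ε/16) (by linarith)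
        exact this.mono (fun j hj => by rw [Real.dist_eq] at hj; exact le_of_lt hj)
      exact (e1.and (e2.and e3))
    obtain ⟨J₀, hJ₀⟩ := Filter.eventually_atTop.mp hev
    rw [Filter.frequently_atTop]
    intro K
    set m := max J₀ K with hmdef
    set i := p (m+1) - s (m+1) with hidef
    have hiL : i < L (m+1) := by
      have := hsp (m+1)
      have := hpe (m+1)
      simp only [hLdef, hidef]
      omega
    refine ⟨off (m+1) + i, ?_, ?_⟩
    · have := hoff_ge (m+1)
      omega
    · have hcomp := hMAIN m i hiL
      have hpi : s (m+1) + i = p (m+1) := by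
        have := hsp (m+1)
        omega
      have hnr : Y (m+1) - (1/2)^(m+1) ≤ lam (c (m+1)) (p (m+1)) := hnear (m+1)
      have hb1 := (hJ₀ m (le_max_left _ _)).1
      have hb2 := (hJ₀ m (le_max_left _ _)).2.1
      have hb3 := (hJ₀ (m+1) (by omega)).1
      have hb5 := (hJ₀ (m+1) (by omega)).2.2
      have hb6 := (hJ₀ (m+2) (by omega)).1
      have hb7 := (hJ₀ (m+2) (by omega)).2.1
      have hpow : ∀ n, ((1:ℝ)/2)^(L n) ≤ ((1:ℝ)/2)^n := by
        intro n
        apply pow_le_pow_of_le_one (by norm_num) (by norm_num)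
        have := hL n
        omega
      have hp1 := hpow m
      have hp2 := hpow (m+2)
      have hhalf : ((1:ℝ)/2)^(m+1) ≤ ((1:ℝ)/2)^m :=
        pow_le_pow_of_le_one (by norm_num) (by norm_num) (by omega)
      have := abs_le.mp hcomp
      have hYx := abs_le.mp hb5
      rw [hpi] at this
      have h1 := this.1
      linarith [hnr]


/-- The Lagrange spectrum: finite values of limsup (b_{k+1} + t_{k+1} + vₖ). -/
noncomputable def lagrangeSpectrum : Set ℝ :=
  {x | ∃ a : ℕ → ℕ, (∀ n, 1 ≤ a n) ∧
    Filter.limsup (fun k => (((a k : ℝ) + cfT a (k + 1) + cfV a k : ℝ) : EReal))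
      Filter.atTop = (x : EReal)}

/-- the Lagrange spectrum is closed. -/
theorem stmt18 : IsClosed lagrangeSpectrum := by
  apply IsSeqClosed.isClosed
  intro Xs x hmem hlim
  choose b hb hblim using hmem
  have hblim' : ∀ j, Filter.limsup (fun k => ((lam (b j) k : ℝ) : EReal)) Filter.atTop
      = (Xs j : EReal) := by
    intro j
    have := hblim j
    simpa [lam] using this
  obtain ⟨a, ha1, ha2⟩ := spectrum_limit x Xs b hb hlim hblim'
  exact ⟨a, ha1, by simpa [lam] using ha2⟩
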